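/- In the setting above, there is a constant C > 0 independent of t ∈ (0,T] such that the non-negative minimizer φ₊(·,t) of J⁺_t satisfies ∫₀^t (φ₊'(·,t))² ≤ C t^{(2+q)/(2-q)}. -/

import Mathlib

open Set MeasureTheory Filter Topology

/-- Admissible class: `C¹` functions on `[0,t]` vanishing at the endpoints
(a classical realization of `H¹₀(0,t)` for this smooth variational problem). -/
def Adm (t : ℝ) : Set (ℝ → ℝ) :=
  {φ : ℝ → ℝ | ContDiffOn ℝ 1 φ (Icc 0 t) ∧ φ 0 = 0 ∧ φ t = 0}

/-- The one-phase functional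
`J⁺_t(φ) = ∫₀^t ((1/2)(φ')² - (γ_q²/2)φ² - (λ₊/q)|φ|^q)`. -/
noncomputable def Jplus (γq lp q t : ℝ) (φ : ℝ → ℝ) : ℝ :=
  ∫ x in Ioo (0 : ℝ) t,
    ((1 / 2) * (deriv φ x) ^ 2 - (γq ^ 2 / 2) * (φ x) ^ 2 - (lp / q) * |φ x| ^ q)

section Wirtinger

lemma wirtinger_core (t : ℝ) (ht : 0 < t) (φ : ℝ → ℝ)
    (hφc : ContinuousOn φ (Icc 0 t))
    (hder : ∀ x ∈ Ioo 0 t, HasDerivAt φ (deriv φ x) x)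
    (hdc : ContinuousOn (deriv φ) (Ioo 0 t))
    (M : ℝ)
    (hb0 : ∀ x ∈ Icc 0 t, |φ x| ≤ M * x)
    (hbt : ∀ x ∈ Icc 0 t, |φ x| ≤ M * (t - x))
    (hint : IntegrableOn (fun x => (deriv φ x)^2 - (Real.pi/t)^2 * (φ x)^2) (Ioo 0 t)) :
    0 ≤ ∫ x in Ioo 0 t, ((deriv φ x)^2 - (Real.pi/t)^2 * (φ x)^2) := by
  have hπ := Real.pi_pos
  set c : ℝ := Real.pi / t with hc
  have hcpos : 0 < c := div_pos hπ ht
  have hct : c * t = Real.pi := by rw [hc, div_mul_cancel₀ _ ht.ne']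
  set w : ℝ → ℝ := fun x => c * Real.cos (c*x) / Real.sin (c*x) with hw
  set F : ℝ → ℝ := fun x => (φ x)^2 * w x with hF
  set H : ℝ → ℝ := fun x => (deriv φ x)^2 - c^2 * (φ x)^2 with hH
  -- sin positivity on (0,t)
  have hsin : ∀ x ∈ Ioo 0 t, 0 < Real.sin (c*x) := by
    intro x hx
    apply Real.sin_pos_of_pos_of_lt_pi (mul_pos hcpos hx.1)
    rw [← hct]
    exact (mul_lt_mul_iff_right₀ hcpos).2 hx.2
  -- derivative of w
  have hwderiv : ∀ x ∈ Ioo 0 t, HasDerivAt w (-(c^2 + (w x)^2)) x := by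
    intro x hx
    have hs := hsin x hx
    have hsin' : HasDerivAt (fun y => Real.sin (c*y)) (Real.cos (c*x) * c) x := by
      exact ((Real.hasDerivAt_sin (c*x)).comp x ((hasDerivAt_id x).const_mul c)).congr_deriv (by simp)
    have hcos' : HasDerivAt (fun y => Real.cos (c*y)) (-Real.sin (c*x) * c) x := by
      exact ((Real.hasDerivAt_cos (c*x)).comp x ((hasDerivAt_id x).const_mul c)).congr_deriv (by simp)
    have hdiv := ((hcos'.const_mul c).div hsin' hs.ne')
    refine hdiv.congr_deriv (Eq.symm ?_)
    have hpyth := Real.sin_sq_add_cos_sq (c*x)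
    rw [hw]
    field_simp
    nlinarith [hs, sq_nonneg (Real.sin (c*x))]
  -- derivative of F
  have hFderiv : ∀ x ∈ Ioo 0 t, HasDerivAt F
      ((deriv φ x)^2 - c^2 * (φ x)^2 - (deriv φ x - φ x * w x)^2) x := by
    intro x hx
    have h := ((hder x hx).pow 2).mul (hwderiv x hx)
    refine h.congr_deriv (Eq.symm ?_)
    simp only [Pi.pow_apply]
    ring
  -- continuity of w on (0,t)
  have hwc : ContinuousOn w (Ioo 0 t) := by
    apply ContinuousOn.div
    · exact (continuous_const.mul (Real.continuous_cos.comp (continuous_const.mul continuous_id))).continuousOn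
    · exact (Real.continuous_sin.comp (continuous_const.mul continuous_id)).continuousOn
    · exact fun x hx => (hsin x hx).ne'
  -- Step C : for 0 < a ≤ b < t, the truncated integral dominates boundary terms
  have stepC : ∀ a b, 0 < a → a ≤ b → b < t →
      F b - F a ≤ ∫ x in Ioc a b, H x := by
    intro a b ha hab hb
    have hsub : Icc a b ⊆ Ioo 0 t := fun x hx => ⟨lt_of_lt_of_le ha hx.1, lt_of_le_of_lt hx.2 hb⟩
    have hHc : ContinuousOn H (Icc a b) := by
      apply ContinuousOn.sub
      · exact ((hdc.mono hsub).pow 2)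
      · exact continuousOn_const.mul ((hφc.mono (hsub.trans Ioo_subset_Icc_self)).pow 2)
    have hGc : ContinuousOn (fun x => (deriv φ x - φ x * w x)^2) (Icc a b) := by
      apply ContinuousOn.pow
      exact (hdc.mono hsub).sub ((hφc.mono (hsub.trans Ioo_subset_Icc_self)).mul (hwc.mono hsub))
    have hHi : IntervalIntegrable H volume a b := by
      apply ContinuousOn.intervalIntegrable; rwa [uIcc_of_le hab]
    have hGi : IntervalIntegrable (fun x => (deriv φ x - φ x * w x)^2) volume a b := by
      apply ContinuousOn.intervalIntegrable; rwa [uIcc_of_le hab]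
    have hftc : ∫ x in a..b, (H x - (deriv φ x - φ x * w x)^2) = F b - F a := by
      apply intervalIntegral.integral_eq_sub_of_hasDerivAt
      · intro x hx
        rw [uIcc_of_le hab] at hx
        exact hFderiv x (hsub hx)
      · exact hHi.sub hGi
    rw [intervalIntegral.integral_sub hHi hGi] at hftc
    have hnn : 0 ≤ ∫ x in a..b, (deriv φ x - φ x * w x)^2 :=
      intervalIntegral.integral_nonneg hab (fun u _ => sq_nonneg _)
    rw [← intervalIntegral.integral_of_le hab]
    linarith
  -- boundary bounds for F
  have hFbd0 : ∀ x ∈ Ioo 0 t, c * x ≤ 1 → |F x| ≤ 2*M^2*x := by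
    intro x hx hcx
    have hs := hsin x hx
    have hslb : c*x/2 ≤ Real.sin (c*x) := by
      have := Real.sin_gt_sub_cube (mul_pos hcpos hx.1)
      nlinarith [sq_nonneg (c*x), hx.1, hcpos]
    have hφb := hb0 x (Ioo_subset_Icc_self hx)
    have hM0 : 0 ≤ M * x := le_trans (abs_nonneg _) hφb
    have hwb : |w x| ≤ 2 / x := by
      rw [hw]
      simp only []
      rw [abs_div, abs_of_pos hs, div_le_div_iff₀ hs hx.1]
      have h1 : |c * Real.cos (c*x)| ≤ c := by
        rw [abs_mul, abs_of_pos hcpos]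
        nlinarith [Real.abs_cos_le_one (c*x)]
      nlinarith [hx.1, hslb, hcpos]
    calc |F x| = (φ x)^2 * |w x| := by
          simp only [hF, abs_mul, abs_of_nonneg (sq_nonneg (φ x))]
    _ ≤ (M*x)^2 * (2/x) := by
        apply mul_le_mul _ hwb (abs_nonneg _) (by positivity)
        calc (φ x)^2 = |φ x|^2 := (sq_abs _).symm
        _ ≤ (M*x)^2 := by nlinarith [abs_nonneg (φ x)]
    _ = 2*M^2*x := by field_simp [hx.1.ne']
  have hFbdt : ∀ x ∈ Ioo 0 t, c * (t - x) ≤ 1 → |F x| ≤ 2*M^2*(t-x) := by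
    intro x hx hcx
    have hs := hsin x hx
    have htx : 0 < t - x := by linarith [hx.2]
    have hseq : Real.sin (c*x) = Real.sin (c*(t-x)) := by
      have h : c*(t-x) = Real.pi - c*x := by rw [← hct]; ring
      rw [h, Real.sin_pi_sub]
    have hslb : c*(t-x)/2 ≤ Real.sin (c*x) := by
      rw [hseq]
      have := Real.sin_gt_sub_cube (mul_pos hcpos htx)
      nlinarith [sq_nonneg (c*(t-x)), htx, hcpos]
    have hφb := hbt x (Ioo_subset_Icc_self hx)
    have hM0 : 0 ≤ M * (t-x) := le_trans (abs_nonneg _) hφb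
    have hwb : |w x| ≤ 2 / (t-x) := by
      rw [hw]
      simp only []
      rw [abs_div, abs_of_pos hs, div_le_div_iff₀ hs htx]
      have h1 : |c * Real.cos (c*x)| ≤ c := by
        rw [abs_mul, abs_of_pos hcpos]
        nlinarith [Real.abs_cos_le_one (c*x)]
      nlinarith [htx, hslb, hcpos]
    calc |F x| = (φ x)^2 * |w x| := by
          simp only [hF, abs_mul, abs_of_nonneg (sq_nonneg (φ x))]
    _ ≤ (M*(t-x))^2 * (2/(t-x)) := by
        apply mul_le_mul _ hwb (abs_nonneg _) (by positivity)
        calc (φ x)^2 = |φ x|^2 := (sq_abs _).symm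
        _ ≤ (M*(t-x))^2 := by nlinarith [abs_nonneg (φ x)]
    _ = 2*M^2*(t-x) := by field_simp [htx.ne']
  -- the exhausting sequences
  set a : ℕ → ℝ := fun n => t / ((n:ℝ)+2) with haa
  set b : ℕ → ℝ := fun n => t - t / ((n:ℝ)+2) with hbb
  have hapos : ∀ n, 0 < a n := fun n => by positivity
  have halt : ∀ n, a n ≤ b n := by
    intro n
    have h2 : t/((n:ℝ)+2) ≤ t/2 :=
      div_le_div_of_nonneg_left ht.le two_pos (by exact_mod_cast by linarith [Nat.cast_nonneg (α := ℝ) n])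
    simp only [haa, hbb]
    linarith
  have hblt : ∀ n, b n < t := by
    intro n; simp only [hbb]; linarith [hapos n]
  have haIoo : ∀ n, a n ∈ Ioo 0 t := fun n => ⟨hapos n, lt_of_le_of_lt (halt n) (hblt n)⟩
  have hbIoo : ∀ n, b n ∈ Ioo 0 t := fun n => ⟨lt_of_lt_of_le (hapos n) (halt n), hblt n⟩
  have hamono : ∀ ⦃n m : ℕ⦄, n ≤ m → a m ≤ a n := by
    intro n m hnm
    apply div_le_div_of_nonneg_left ht.le (by positivity)
    have : (n:ℝ) ≤ m := by exact_mod_cast hnm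
    linarith
  have hsmono : Monotone (fun n => Ioc (a n) (b n)) := by
    intro n m hnm
    apply Ioc_subset_Ioc (hamono hnm)
    simp only [hbb]
    linarith [hamono hnm]
  have hUnion : (⋃ n, Ioc (a n) (b n)) = Ioo 0 t := by
    ext x
    simp only [mem_iUnion, mem_Ioc, mem_Ioo]
    constructor
    · rintro ⟨n, h1, h2⟩
      exact ⟨lt_trans (hapos n) h1, lt_of_le_of_lt h2 (hblt n)⟩
    · rintro ⟨hx1, hx2⟩
      have hm : 0 < min x (t - x) := lt_min hx1 (by linarith)
      obtain ⟨n, hn⟩ := exists_nat_gt (t / min x (t-x))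
      refine ⟨n, ?_, ?_⟩
      · have h1 : t / ((n:ℝ)+2) < min x (t-x) := by
          rw [div_lt_iff₀ (by positivity)]
          rw [div_lt_iff₀ hm] at hn
          nlinarith [hm, hn]
        exact lt_of_lt_of_le h1 (min_le_left _ _)
      · have h1 : t / ((n:ℝ)+2) < min x (t-x) := by
          rw [div_lt_iff₀ (by positivity)]
          rw [div_lt_iff₀ hm] at hn
          nlinarith [hm, hn]
        have := lt_of_lt_of_le h1 (min_le_right _ _)
        simp only [hbb]; linarith
  -- limits
  have hdenom : Tendsto (fun n : ℕ => (n:ℝ)+2) atTop atTop :=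
    tendsto_atTop_add_const_right atTop 2 tendsto_natCast_atTop_atTop
  have hta : Tendsto a atTop (𝓝 0) := tendsto_const_nhds.div_atTop hdenom
  have htInt : Tendsto (fun n => ∫ x in Ioc (a n) (b n), H x) atTop (𝓝 (∫ x in Ioo 0 t, H x)) := by
    have := tendsto_setIntegral_of_monotone (fun n => measurableSet_Ioc) hsmono
      (by rw [hUnion]; exact hint)
    rwa [hUnion] at this
  have hFa : Tendsto (fun n => F (a n)) atTop (𝓝 0) := by
    rw [tendsto_zero_iff_abs_tendsto_zero]
    apply squeeze_zero' (Eventually.of_forall (fun n => abs_nonneg _))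
    · have hev : ∀ᶠ n in atTop, a n < 1/c := hta.eventually_lt_const (by positivity)
      filter_upwards [hev] with n hn
      exact hFbd0 (a n) (haIoo n) (by rw [lt_div_iff₀ hcpos] at hn; linarith [mul_comm c (a n)] )
    · simpa using hta.const_mul (2*M^2)
  have hFb : Tendsto (fun n => F (b n)) atTop (𝓝 0) := by
    rw [tendsto_zero_iff_abs_tendsto_zero]
    apply squeeze_zero' (g := fun n => 2*M^2 * a n)
      (Eventually.of_forall (fun n => abs_nonneg _))
    · have hev : ∀ᶠ n in atTop, a n < 1/c := hta.eventually_lt_const (by positivity)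
      filter_upwards [hev] with n hn
      have htb : t - b n = a n := by simp only [hbb]; ring
      have hcb : c * (t - b n) ≤ 1 := by
        rw [htb]
        rw [lt_div_iff₀ hcpos] at hn
        nlinarith [hcpos]
      have := hFbdt (b n) (hbIoo n) hcb
      rwa [htb] at this
    · simpa using hta.const_mul (2*M^2)
  have hbd : Tendsto (fun n => F (b n) - F (a n)) atTop (𝓝 0) := by
    simpa using hFb.sub hFa
  have := le_of_tendsto_of_tendsto' hbd htInt
    (fun n => stepC (a n) (b n) (hapos n) (halt n) (hblt n))
  simpa [hH, hc] using this

end Wirtinger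

set_option maxHeartbeats 1000000 in
/-- there is `C > 0`, independent of `t ∈ (0,T]`, such that every
non-negative minimizer `φ₊(·,t)` of `J⁺_t` satisfies
`∫₀^t (φ₊'(·,t))² ≤ C t^{(2+q)/(2-q)}`. -/
theorem Jplus_minimizer_energy_bound (k : ℕ) (hk : 1 ≤ k) (q lp : ℝ)
    (hq1 : 1 ≤ q) (hq2 : q < 2) (hlp : 0 < lp)
    (hkγ : (2 / (2 - q)) ^ 2 < (k : ℝ) ^ 2 / 4) :
    ∃ C : ℝ, 0 < C ∧
      ∀ t ∈ Ioc (0 : ℝ) (2 * Real.pi / k), ∀ φ ∈ Adm t,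
        (∀ x ∈ Icc (0 : ℝ) t, 0 ≤ φ x) →
        (∀ ψ ∈ Adm t, Jplus (2 / (2 - q)) lp q t φ ≤ Jplus (2 / (2 - q)) lp q t ψ) →
        (∫ x in Ioo (0 : ℝ) t, (deriv φ x) ^ 2) ≤ C * t ^ ((2 + q) / (2 - q)) := by
  have hπ := Real.pi_pos
  have h2q : (0:ℝ) < 2 - q := by linarith
  have hqpos : (0:ℝ) < q := by linarith
  set γ : ℝ := 2/(2-q) with hγ
  have hγpos : 0 < γ := by positivity
  have hkpos : (0:ℝ) < k := by exact_mod_cast hk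
  set Cb : ℝ := 1/2 - 2*γ^2/(k:ℝ)^2 with hCb
  have hCbpos : 0 < Cb := by
    have h1 : 2*γ^2/(k:ℝ)^2 < 1/2 := by
      rw [div_lt_iff₀ (by positivity)]
      nlinarith [hkγ]
    rw [hCb]; linarith
  set C : ℝ := ((lp/q)/Cb) ^ ((2:ℝ)/(2-q)) with hCdef
  have hCpos : 0 < C := Real.rpow_pos_of_pos (by positivity) _
  clear_value γ Cb C
  refine ⟨C, hCpos, ?_⟩
  rintro t ⟨ht, htT⟩ φ hφ hφnn hmin
  obtain ⟨hφ1, hφ0, hφt⟩ := hφ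
  have hφc : ContinuousOn φ (Icc 0 t) := hφ1.continuousOn
  have hder : ∀ x ∈ Ioo 0 t, HasDerivAt φ (deriv φ x) x := by
    intro x hx
    have hnb : Icc (0:ℝ) t ∈ nhds x := Icc_mem_nhds hx.1 hx.2
    exact ((hφ1.contDiffAt hnb).differentiableAt one_ne_zero).hasDerivAt
  set D : ℝ → ℝ := derivWithin φ (Icc 0 t) with hD
  have hDc : ContinuousOn D (Icc 0 t) :=
    hφ1.continuousOn_derivWithin (uniqueDiffOn_Icc ht) le_rfl
  have hEqD : ∀ x ∈ Ioo 0 t, deriv φ x = D x := by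
    intro x hx
    exact (derivWithin_of_mem_nhds (Icc_mem_nhds hx.1 hx.2)).symm
  have hdc : ContinuousOn (deriv φ) (Ioo 0 t) :=
    ((hDc.mono Ioo_subset_Icc_self).congr (fun x hx => hEqD x hx))
  obtain ⟨M, hM⟩ := isCompact_Icc.exists_bound_of_continuousOn hDc
  have hM0 : 0 ≤ M := le_trans (norm_nonneg _) (hM 0 ⟨le_refl _, ht.le⟩)
  have hdiff : DifferentiableOn ℝ φ (Icc 0 t) := hφ1.differentiableOn one_ne_zero
  have hb0 : ∀ x ∈ Icc 0 t, |φ x| ≤ M * x := by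
    intro x hx
    have h := Convex.norm_image_sub_le_of_norm_derivWithin_le hdiff hM
      (convex_Icc 0 t) (⟨le_refl _, ht.le⟩ : (0:ℝ) ∈ Icc 0 t) hx
    rw [hφ0] at h
    simpa [Real.norm_eq_abs, abs_of_nonneg hx.1] using h
  have hbt : ∀ x ∈ Icc 0 t, |φ x| ≤ M * (t - x) := by
    intro x hx
    have h := Convex.norm_image_sub_le_of_norm_derivWithin_le hdiff hM
      (convex_Icc 0 t) (⟨ht.le, le_refl _⟩ : t ∈ Icc 0 t) hx
    rw [hφt] at h
    have hxt : |x - t| = t - x := by rw [abs_sub_comm, abs_of_nonneg (by linarith [hx.2])]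
    simpa [Real.norm_eq_abs, hxt] using h
  have hderivbd : ∀ x ∈ Ioo 0 t, |deriv φ x| ≤ M := by
    intro x hx
    rw [hEqD x hx]
    exact hM x (Ioo_subset_Icc_self hx)
  have hvol : volume (Ioo (0:ℝ) t) < ⊤ := by
    rw [Real.volume_Ioo]; exact ENNReal.ofReal_lt_top
  -- integrability
  have Id : IntegrableOn (deriv φ) (Ioo 0 t) := by
    apply Integrable.mono' (g := fun _ => M) (integrableOn_const hvol.ne)
      (measurable_deriv φ).aestronglyMeasurable.restrict
    rw [ae_restrict_iff' measurableSet_Ioo]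
    exact Filter.Eventually.of_forall (fun x hx => hderivbd x hx)
  have I1 : IntegrableOn (fun x => (deriv φ x)^2) (Ioo 0 t) := by
    apply Integrable.mono' (g := fun _ => M^2) (integrableOn_const hvol.ne)
      ((measurable_deriv φ).pow_const 2).aestronglyMeasurable.restrict
    rw [ae_restrict_iff' measurableSet_Ioo]
    apply Filter.Eventually.of_forall
    intro x hx
    have := hderivbd x hx
    rw [Real.norm_eq_abs, abs_of_nonneg (sq_nonneg _)]
    nlinarith [abs_nonneg (deriv φ x), sq_abs (deriv φ x)]
  have I2 : IntegrableOn (fun x => (φ x)^2) (Ioo 0 t) :=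
    ((hφc.pow 2).integrableOn_Icc).mono_set Ioo_subset_Icc_self
  have I3 : IntegrableOn (fun x => |φ x| ^ q) (Ioo 0 t) :=
    ((hφc.abs.rpow_const (fun x _ => Or.inr hqpos.le)).integrableOn_Icc).mono_set
      Ioo_subset_Icc_self
  set E : ℝ := ∫ x in Ioo (0:ℝ) t, (deriv φ x)^2 with hE
  set P : ℝ := ∫ x in Ioo (0:ℝ) t, (φ x)^2 with hP
  set Q : ℝ := ∫ x in Ioo (0:ℝ) t, |φ x| ^ q with hQ
  have hE0 : 0 ≤ E := setIntegral_nonneg measurableSet_Ioo (fun x _ => sq_nonneg _)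
  have hP0 : 0 ≤ P := setIntegral_nonneg measurableSet_Ioo (fun x _ => sq_nonneg _)
  -- splitting of the functional
  have hJsplit : Jplus γ lp q t φ = (1/2)*E - (γ^2/2)*P - (lp/q)*Q := by
    have e1 : ∫ x in Ioo (0:ℝ) t, ((1/2) * (deriv φ x)^2 - (γ^2/2) * (φ x)^2 - (lp/q)*|φ x|^q)
        = (∫ x in Ioo (0:ℝ) t, ((1/2) * (deriv φ x)^2 - (γ^2/2) * (φ x)^2))
          - ∫ x in Ioo (0:ℝ) t, (lp/q)*|φ x|^q := by
      apply integral_sub _ (I3.const_mul _)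
      exact (I1.const_mul _).sub (I2.const_mul _)
    have e2 : ∫ x in Ioo (0:ℝ) t, ((1/2) * (deriv φ x)^2 - (γ^2/2) * (φ x)^2)
        = (∫ x in Ioo (0:ℝ) t, (1/2) * (deriv φ x)^2)
          - ∫ x in Ioo (0:ℝ) t, (γ^2/2) * (φ x)^2 :=
      integral_sub (I1.const_mul _) (I2.const_mul _)
    rw [Jplus, e1, e2, integral_const_mul, integral_const_mul, integral_const_mul, hE, hP, hQ]
  -- value at zero
  have hzeroAdm : (fun _ : ℝ => (0:ℝ)) ∈ Adm t := ⟨contDiffOn_const, rfl, rfl⟩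
  have hJ0 : Jplus γ lp q t (fun _ => (0:ℝ)) = 0 := by
    rw [Jplus]
    have : ∀ x : ℝ, (1 / 2) * (deriv (fun _ : ℝ => (0:ℝ)) x) ^ 2
        - (γ ^ 2 / 2) * ((0:ℝ)) ^ 2 - (lp / q) * |(0:ℝ)| ^ q = 0 := by
      intro x
      simp [Real.zero_rpow hqpos.ne']
    simp only [this]
    exact integral_zero _ _
  have hJle : (1/2)*E - (γ^2/2)*P - (lp/q)*Q ≤ 0 := by
    rw [← hJsplit, ← hJ0]
    exact hmin _ hzeroAdm
  -- Wirtinger inequality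
  have hW : 0 ≤ ∫ x in Ioo (0:ℝ) t, ((deriv φ x)^2 - (Real.pi/t)^2 * (φ x)^2) :=
    wirtinger_core t ht φ hφc hder hdc M hb0 hbt (I1.sub (I2.const_mul _))
  have hPE : (Real.pi/t)^2 * P ≤ E := by
    rw [integral_sub I1 (I2.const_mul _), integral_const_mul] at hW
    rw [← hE, ← hP] at hW
    linarith
  -- pointwise bound ∀ ε
  have hrep : ∀ x ∈ Ioo (0:ℝ) t, ∀ ε : ℝ, 0 < ε → |φ x| ≤ ε*t/2 + E/(2*ε) := by
    intro x hx ε hε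
    have hII : IntervalIntegrable (deriv φ) volume 0 x := by
      rw [intervalIntegrable_iff_integrableOn_Ioc_of_le hx.1.le]
      exact Id.mono_set (fun y hy => ⟨hy.1, lt_of_le_of_lt hy.2 hx.2⟩)
    have hII2 : IntervalIntegrable (fun y => (deriv φ y)^2) volume 0 x := by
      rw [intervalIntegrable_iff_integrableOn_Ioc_of_le hx.1.le]
      exact I1.mono_set (fun y hy => ⟨hy.1, lt_of_le_of_lt hy.2 hx.2⟩)
    have hftc : ∫ y in (0:ℝ)..x, deriv φ y = φ x - φ 0 :=
      intervalIntegral.integral_eq_sub_of_hasDerivAt_of_le hx.1.le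
        (hφc.mono (Icc_subset_Icc le_rfl hx.2.le))
        (fun y hy => hder y ⟨hy.1, hy.2.trans hx.2⟩) hII
    have h1 : |φ x| ≤ ∫ y in (0:ℝ)..x, |deriv φ y| := by
      rw [show |φ x| = |∫ y in (0:ℝ)..x, deriv φ y| by rw [hftc, hφ0, sub_zero]]
      exact intervalIntegral.abs_integral_le_integral_abs hx.1.le
    have h2 : ∫ y in (0:ℝ)..x, |deriv φ y|
        ≤ ∫ y in (0:ℝ)..x, (ε/2 + (deriv φ y)^2/(2*ε)) := by
      apply intervalIntegral.integral_mono_on hx.1.le hII.abs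
        (intervalIntegrable_const.add (hII2.div_const (2*ε)))
      intro y hy
      have hpos : (0:ℝ) < 2*ε := by linarith
      rw [← mul_le_mul_iff_right₀ hpos]
      have he : 2*ε*(ε/2 + (deriv φ y)^2/(2*ε)) = ε^2 + (deriv φ y)^2 := by
        field_simp
      rw [he]
      nlinarith [sq_nonneg (|deriv φ y| - ε), sq_abs (deriv φ y)]
    have h3 : ∫ y in (0:ℝ)..x, (ε/2 + (deriv φ y)^2/(2*ε))
        = ε/2*x + (∫ y in (0:ℝ)..x, (deriv φ y)^2)/(2*ε) := by
      rw [intervalIntegral.integral_add intervalIntegrable_const (hII2.div_const (2*ε)),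
        intervalIntegral.integral_const, intervalIntegral.integral_div]
      simp [mul_comm]
    have h4 : ∫ y in (0:ℝ)..x, (deriv φ y)^2 ≤ E := by
      rw [intervalIntegral.integral_of_le hx.1.le, hE]
      apply setIntegral_mono_set I1
      · exact Filter.Eventually.of_forall (fun y => sq_nonneg _)
      · exact HasSubset.Subset.eventuallyLE (fun y hy => ⟨hy.1, lt_of_le_of_lt hy.2 hx.2⟩)
    have h5 : ε/2*x ≤ ε*t/2 := by nlinarith [hx.2, hε]
    have h6 : (∫ y in (0:ℝ)..x, (deriv φ y)^2)/(2*ε) ≤ E/(2*ε) := by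
      gcongr
    linarith
  -- sup bound
  have hsup : ∀ x ∈ Ioo (0:ℝ) t, |φ x| ≤ Real.sqrt (t*E) := by
    intro x hx
    rcases eq_or_lt_of_le hE0 with hEz|hEpos
    · by_contra hcon
      push_neg at hcon
      have h0 : 0 < |φ x| := lt_of_le_of_lt (Real.sqrt_nonneg _) hcon
      have h := hrep x hx (|φ x|/t) (by positivity)
      rw [← hEz] at h
      have : |φ x|/t*t/2 = |φ x|/2 := by field_simp
      rw [this] at h
      simp at h
      linarith
    · have hst : 0 < Real.sqrt t := Real.sqrt_pos.2 ht
      have hsE : 0 < Real.sqrt E := Real.sqrt_pos.2 hEpos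
      have h := hrep x hx (Real.sqrt E / Real.sqrt t) (by positivity)
      have key : (Real.sqrt E / Real.sqrt t)*t/2 + E/(2*(Real.sqrt E / Real.sqrt t))
          = Real.sqrt (t*E) := by
        rw [Real.sqrt_mul ht.le]
        have h1 : Real.sqrt t ^ 2 = t := Real.sq_sqrt ht.le
        have h2 : Real.sqrt E ^ 2 = E := Real.sq_sqrt hE0
        field_simp
        nlinarith [hst, hsE]
      rw [key] at h
      exact h
  -- bound on Q
  have htE0 : (0:ℝ) ≤ t*E := mul_nonneg ht.le hE0
  have hQbd : Q ≤ t * (t*E)^(q/2) := by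
    have hptw : ∀ x ∈ Ioo (0:ℝ) t, |φ x| ^ q ≤ (t*E)^(q/2) := by
      intro x hx
      have h1 : |φ x| ^ q ≤ Real.sqrt (t*E) ^ q :=
        Real.rpow_le_rpow (abs_nonneg _) (hsup x hx) hqpos.le
      have h2 : Real.sqrt (t*E) ^ q = (t*E)^(q/2) := by
        rw [Real.sqrt_eq_rpow, ← Real.rpow_mul htE0]
        congr 1; ring
      rwa [h2] at h1
    calc Q ≤ ∫ x in Ioo (0:ℝ) t, (t*E)^(q/2) :=
          setIntegral_mono_on I3 (integrableOn_const hvol.ne) measurableSet_Ioo hptw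
    _ = t * (t*E)^(q/2) := by
        rw [setIntegral_const, measureReal_def, Real.volume_Ioo, sub_zero, ENNReal.toReal_ofReal ht.le,
          smul_eq_mul]
  have hQ0 : 0 ≤ Q :=
    setIntegral_nonneg measurableSet_Ioo
      (fun x _ => Real.rpow_nonneg (abs_nonneg _) q)
  clear_value E P Q
  -- main chain
  have hchain : Cb * E ≤ (lp/q) * (t^((2+q)/2) * E^(q/2)) := by
    have hPbd : P ≤ t^2/Real.pi^2 * E := by
      have h := mul_le_mul_of_nonneg_left hPE (by positivity : (0:ℝ) ≤ t^2/Real.pi^2)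
      have he : t^2/Real.pi^2 * ((Real.pi/t)^2 * P) = P := by
        field_simp
      rwa [he] at h
    have hcoef : γ^2/2 * (t^2/Real.pi^2) ≤ 2*γ^2/(k:ℝ)^2 := by
      have ht2 : t^2 * (k:ℝ)^2 ≤ 4*Real.pi^2 := by
        have h := mul_le_mul_of_nonneg_left htT (le_of_lt hkpos)
        have he : (k:ℝ) * (2*Real.pi/k) = 2*Real.pi := by field_simp
        rw [he] at h
        nlinarith [mul_le_mul h h (by positivity : (0:ℝ) ≤ (k:ℝ)*t)
          (by positivity : (0:ℝ) ≤ 2*Real.pi)]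
      have hne : γ^2/2 * (t^2/Real.pi^2) = γ^2*t^2/(2*Real.pi^2) := by ring
      rw [hne, div_le_div_iff₀ (by positivity) (by positivity)]
      nlinarith [mul_le_mul_of_nonneg_left ht2 (sq_nonneg γ)]
    have hRHS : t * (t*E)^(q/2) = t^((2+q)/2) * E^(q/2) := by
      rw [Real.mul_rpow ht.le hE0]
      rw [show (2+q)/2 = 1 + q/2 by ring, Real.rpow_add ht, Real.rpow_one]
      ring
    have hmid : Cb * E ≤ (lp/q) * Q := by
      have e1 : (γ^2/2)*P ≤ (γ^2/2)*(t^2/Real.pi^2 * E) :=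
        mul_le_mul_of_nonneg_left hPbd (by positivity)
      have e2 : γ^2/2 * (t^2/Real.pi^2) * E ≤ 2*γ^2/(k:ℝ)^2 * E :=
        mul_le_mul_of_nonneg_right hcoef hE0
      rw [hCb]
      linarith [hJle, e1, e2,
        show (γ^2/2)*(t^2/Real.pi^2 * E) = γ^2/2 * (t^2/Real.pi^2) * E from by ring]
    calc Cb * E ≤ (lp/q)*Q := hmid
    _ ≤ (lp/q) * (t * (t*E)^(q/2)) := mul_le_mul_of_nonneg_left hQbd (by positivity)
    _ = (lp/q) * (t^((2+q)/2) * E^(q/2)) := by rw [hRHS]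
  -- final algebra
  rcases eq_or_lt_of_le hE0 with hEz|hEpos
  · rw [← hEz]
    positivity
  · have hEq2 : E = E^(((2:ℝ)-q)/2) * E^(q/2) := by
      rw [← Real.rpow_add hEpos]
      rw [show ((2:ℝ)-q)/2 + q/2 = 1 by ring, Real.rpow_one]
    have hEqhpos : 0 < E^(q/2) := Real.rpow_pos_of_pos hEpos _
    have h3 : Cb * E^(((2:ℝ)-q)/2) ≤ (lp/q) * t^((2+q)/2) := by
      have h' : (Cb * E^(((2:ℝ)-q)/2)) * E^(q/2) ≤ ((lp/q) * t^((2+q)/2)) * E^(q/2) := by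
        calc (Cb * E^(((2:ℝ)-q)/2)) * E^(q/2)
            = Cb * (E^(((2:ℝ)-q)/2) * E^(q/2)) := by ring
        _ = Cb * E := by rw [← hEq2]
        _ ≤ (lp/q) * (t^((2+q)/2) * E^(q/2)) := hchain
        _ = ((lp/q) * t^((2+q)/2)) * E^(q/2) := by ring
      exact le_of_mul_le_mul_right h' hEqhpos
    have h4 : E^(((2:ℝ)-q)/2) ≤ (lp/q)/Cb * t^((2+q)/2) := by
      rw [div_mul_eq_mul_div, le_div_iff₀ hCbpos]
      linarith [h3, mul_comm (E^(((2:ℝ)-q)/2)) Cb]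
    have h5 := Real.rpow_le_rpow (Real.rpow_nonneg hE0 _) h4
      (by positivity : (0:ℝ) ≤ 2/(2-q))
    have hLHS : (E^(((2:ℝ)-q)/2))^((2:ℝ)/(2-q)) = E := by
      rw [← Real.rpow_mul hE0]
      rw [show ((2:ℝ)-q)/2 * (2/(2-q)) = 1 by field_simp, Real.rpow_one]
    have hRHS2 : ((lp/q)/Cb * t^((2+q)/2))^((2:ℝ)/(2-q))
        = C * t^((2+q)/(2-q)) := by
      rw [Real.mul_rpow (by positivity) (Real.rpow_nonneg ht.le _)]
      rw [← Real.rpow_mul ht.le]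
      rw [show (2+q)/2 * (2/(2-q)) = (2+q)/(2-q) by field_simp]
      rw [hCdef]
    rw [hLHS, hRHS2] at h5
    exact h5
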